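/- Suppose the counterfactual variables {Y(a,m) : a ∈ {0,1}, m} ∪ {M(a') : a' ∈ {0,1}} ∪ {A} are mutually independent, Y and M satisfy consistency (Y = Y(A, M(A)) and M = M(A)), M is discrete with finitely many values, and P(A = a, M = m) > 0 for all a, m. Then E[Y(1, M(0))] − E[Y(0)] = Σ_m (E[Y | A=1, M=m] − E[Y | A=0, M=m]) · P(M = m | A = 0). -/

import Mathlib

open MeasureTheory ProbabilityTheory

/-- Index type for the family of counterfactuals `{Y(a,m)} ∪ {M(a')} ∪ {A}`. -/
def MedIndex (𝓜 : Type) : Type := (Bool × 𝓜) ⊕ Bool ⊕ Unit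

/-- Codomain of each member of the counterfactual family. -/
def MedCodomain (𝓜 : Type) : MedIndex 𝓜 → Type
  | Sum.inl _ => ℝ
  | Sum.inr (Sum.inl _) => 𝓜
  | Sum.inr (Sum.inr _) => Bool

/-- The family of counterfactual random variables. -/
def medFamily {Ω : Type*} {𝓜 : Type} (Y : Bool → 𝓜 → Ω → ℝ) (M : Bool → Ω → 𝓜) (A : Ω → Bool) :
    ∀ i : MedIndex 𝓜, Ω → MedCodomain 𝓜 i
  | Sum.inl am => Y am.1 am.2
  | Sum.inr (Sum.inl a) => M a
  | Sum.inr (Sum.inr _) => A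

/-- The measurable-space structure on each codomain. -/
def medMS (𝓜 : Type) [m𝓜 : MeasurableSpace 𝓜] :
    ∀ i : MedIndex 𝓜, MeasurableSpace (MedCodomain 𝓜 i)
  | Sum.inl _ => inferInstanceAs (MeasurableSpace ℝ)
  | Sum.inr (Sum.inl _) => m𝓜
  | Sum.inr (Sum.inr _) => inferInstanceAs (MeasurableSpace Bool)

/-- Pearl's mediation formula.  If the counterfactuals
`{Y(a,m)} ∪ {M(a')} ∪ {A}` are mutually independent, consistency holds, `M` is
finite-valued, and positivity holds, then
`E[Y(1, M(0))] − E[Y(0)] = Σ_m (E[Y | A=1, M=m] − E[Y | A=0, M=m]) P(M=m | A=0)`. -/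
theorem mediation_formula
    {Ω : Type*} [MeasurableSpace Ω] (μ : Measure Ω) [IsProbabilityMeasure μ]
    {𝓜 : Type} [Fintype 𝓜] [MeasurableSpace 𝓜] [MeasurableSingletonClass 𝓜]
    (Y : Bool → 𝓜 → Ω → ℝ) (M : Bool → Ω → 𝓜) (A : Ω → Bool)
    (hmY : ∀ a m, Measurable (Y a m)) (hmM : ∀ a, Measurable (M a)) (hmA : Measurable A)
    (hint : ∀ a m, Integrable (Y a m) μ)
    (hint' : ∀ a a' : Bool, Integrable (fun ω => Y a (M a' ω) ω) μ)
    (hindep : iIndepFun (m := medMS 𝓜) (medFamily Y M A) μ)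
    (Mobs : Ω → 𝓜) (Yobs : Ω → ℝ)
    (hMcons : ∀ ω, Mobs ω = M (A ω) ω)
    (hYcons : ∀ ω, Yobs ω = Y (A ω) (Mobs ω) ω)
    (hpos : ∀ (a : Bool) (m : 𝓜), 0 < μ {ω | A ω = a ∧ Mobs ω = m}) :
    (∫ ω, Y true (M false ω) ω ∂μ) - (∫ ω, Y false (M false ω) ω ∂μ) =
      ∑ m : 𝓜,
        ((∫ ω, Yobs ω ∂(μ[|{ω | A ω = true ∧ Mobs ω = m}])) -
          (∫ ω, Yobs ω ∂(μ[|{ω | A ω = false ∧ Mobs ω = m}]))) *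
        (μ[|{ω | A ω = false}] {ω | Mobs ω = m}).toReal := by
  classical
  -- measurability of the family
  have hmFam : ∀ i, @Measurable _ _ _ (medMS 𝓜 i) (medFamily Y M A i) := by
    rintro (⟨a, m⟩ | a | ⟨⟩)
    · exact hmY a m
    · exact hmM a
    · exact hmA
  -- independence facts
  have hYM : ∀ (a a' : Bool) (m : 𝓜), IndepFun (Y a m) (M a') μ := fun a a' m =>
    hindep.indepFun (show (Sum.inl (a, m) : MedIndex 𝓜) ≠ Sum.inr (Sum.inl a') by simp)
  have hAM : IndepFun A (M false) μ :=
    hindep.indepFun (show (Sum.inr (Sum.inr ()) : MedIndex 𝓜) ≠ Sum.inr (Sum.inl false) by simp)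
  have hpair : ∀ (a : Bool) (m : 𝓜), IndepFun (fun ω => (A ω, M a ω)) (Y a m) μ := fun a m =>
    hindep.indepFun_prodMk hmFam (Sum.inr (Sum.inr ())) (Sum.inr (Sum.inl a)) (Sum.inl (a, m))
      (by exact Sum.inr_ne_inl) (by exact Sum.inr_ne_inl)
  -- rewriting events in terms of the counterfactual M
  have hSeq : ∀ (a : Bool) (m : 𝓜),
      {ω | A ω = a ∧ Mobs ω = m} = A ⁻¹' {a} ∩ (M a) ⁻¹' {m} := by
    intro a m; ext ω
    simp only [Set.mem_setOf_eq, Set.mem_inter_iff, Set.mem_preimage, Set.mem_singleton_iff]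
    constructor
    · rintro ⟨h1, h2⟩; exact ⟨h1, by rw [← h2, hMcons, h1]⟩
    · rintro ⟨h1, h2⟩; exact ⟨h1, by rw [hMcons, h1, h2]⟩
  -- KEY 1: E[Y(a, M(a'))] = Σ_m E[Y(a,m)] P(M(a') = m)
  have key1 : ∀ a a' : Bool, (∫ ω, Y a (M a' ω) ω ∂μ)
      = ∑ m : 𝓜, (∫ ω, Y a m ω ∂μ) * (μ ((M a') ⁻¹' {m})).toReal := by
    intro a a'
    have hdecomp : (fun ω => Y a (M a' ω) ω)
        = fun ω => ∑ m : 𝓜, Y a m ω * (if M a' ω = m then (1:ℝ) else 0) := by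
      funext ω
      rw [Finset.sum_eq_single (M a' ω)]
      · simp
      · intro b _ hb
        rw [if_neg (Ne.symm hb), mul_zero]
      · simp
    have hset : ∀ m : 𝓜, MeasurableSet ((M a') ⁻¹' {m}) := fun m =>
      hmM a' (measurableSet_singleton m)
    have heq : ∀ m : 𝓜, (fun ω => Y a m ω * (if M a' ω = m then (1:ℝ) else 0))
        = Set.indicator ((M a') ⁻¹' {m}) (Y a m) := by
      intro m; funext ω; by_cases h : M a' ω = m <;> simp [Set.indicator, h]
    have hintm : ∀ m : 𝓜, Integrable (fun ω => Y a m ω * (if M a' ω = m then (1:ℝ) else 0)) μ := by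
      intro m; rw [heq]; exact (hint a m).indicator (hset m)
    calc (∫ ω, Y a (M a' ω) ω ∂μ)
        = ∫ ω, ∑ m : 𝓜, Y a m ω * (if M a' ω = m then (1:ℝ) else 0) ∂μ := by rw [← hdecomp]
      _ = ∑ m : 𝓜, ∫ ω, Y a m ω * (if M a' ω = m then (1:ℝ) else 0) ∂μ :=
          integral_finset_sum _ fun m _ => hintm m
      _ = ∑ m : 𝓜, (∫ ω, Y a m ω ∂μ) * (μ ((M a') ⁻¹' {m})).toReal := by
          refine Finset.sum_congr rfl fun m _ => ?_
          have hg : Measurable (fun x : 𝓜 => if x = m then (1:ℝ) else 0) :=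
            measurable_const.ite (measurableSet_singleton m) measurable_const
          have hmul := (hYM a a' m).comp measurable_id hg
          have hie : (fun ω => if M a' ω = m then (1:ℝ) else 0)
              = Set.indicator ((M a') ⁻¹' {m}) (fun _ => (1:ℝ)) := by
            funext ω; by_cases h : M a' ω = m <;> simp [Set.indicator, h]
          have hig : Integrable ((fun x : 𝓜 => if x = m then (1:ℝ) else 0) ∘ M a') μ := by
            rw [show ((fun x : 𝓜 => if x = m then (1:ℝ) else 0) ∘ M a')
                = fun ω => if M a' ω = m then (1:ℝ) else 0 from rfl, hie]
            exact (integrable_const (1:ℝ)).indicator (hset m)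
          have hprod := hmul.integral_mul_eq_mul_integral (hint a m).aestronglyMeasurable hig.aestronglyMeasurable
          rw [show (id ∘ Y a m * (fun x : 𝓜 => if x = m then (1:ℝ) else 0) ∘ M a')
              = fun ω => Y a m ω * (if M a' ω = m then (1:ℝ) else 0) from rfl] at hprod
          rw [hprod]
          show (∫ ω, Y a m ω ∂μ) * (∫ ω, (if M a' ω = m then (1:ℝ) else 0) ∂μ) = _
          rw [hie, integral_indicator_const _ (hset m)]
          simp [mul_comm, Measure.real]
  -- KEY 2: E[Y | A = a, M = m] = E[Y(a,m)]
  have key2 : ∀ (a : Bool) (m : 𝓜),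
      (∫ ω, Yobs ω ∂(μ[|{ω | A ω = a ∧ Mobs ω = m}])) = ∫ ω, Y a m ω ∂μ := by
    intro a m
    set S := {ω | A ω = a ∧ Mobs ω = m} with hSdef0
    have hSdef : S = A ⁻¹' {a} ∩ (M a) ⁻¹' {m} := hSeq a m
    have hSmeas : MeasurableSet S := by
      rw [hSdef]
      exact (hmA (measurableSet_singleton a)).inter (hmM a (measurableSet_singleton m))
    have hSne : μ S ≠ 0 := (hpos a m).ne'
    have hSfin : μ S ≠ ⊤ := measure_ne_top μ S
    have hcong : ∀ ω ∈ S, Yobs ω = Y a m ω := by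
      rintro ω ⟨h1, h2⟩; rw [hYcons, h1, h2]
    have hg : Measurable (fun p : Bool × 𝓜 => if p = (a, m) then (1:ℝ) else 0) :=
      measurable_const.ite (measurableSet_singleton (a, m)) measurable_const
    have hindS : IndepFun (fun ω => if ω ∈ S then (1:ℝ) else 0) (Y a m) μ := by
      have h := (hpair a m).comp hg measurable_id
      have he : ((fun p : Bool × 𝓜 => if p = (a, m) then (1:ℝ) else 0) ∘ fun ω => (A ω, M a ω))
          = fun ω => if ω ∈ S then (1:ℝ) else 0 := by
        funext ω
        simp only [Function.comp_apply, hSdef, Set.mem_inter_iff, Set.mem_preimage,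
          Set.mem_singleton_iff, Prod.mk.injEq, Prod.ext_iff]
      rwa [he] at h
    have hie : (fun ω => if ω ∈ S then (1:ℝ) else 0) = Set.indicator S (fun _ => (1:ℝ)) := by
      funext ω; by_cases h : ω ∈ S <;> simp [Set.indicator, h]
    have hig : Integrable (fun ω => if ω ∈ S then (1:ℝ) else 0) μ := by
      rw [hie]; exact (integrable_const (1:ℝ)).indicator hSmeas
    have hsetint : (∫ ω in S, Y a m ω ∂μ) = (μ S).toReal * ∫ ω, Y a m ω ∂μ := by
      have h1 : (∫ ω in S, Y a m ω ∂μ) = ∫ ω, Set.indicator S (Y a m) ω ∂μ :=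
        (integral_indicator hSmeas).symm
      have h2 : Set.indicator S (Y a m) = (fun ω => if ω ∈ S then (1:ℝ) else 0) * Y a m := by
        funext ω; by_cases h : ω ∈ S <;> simp [Set.indicator, h]
      rw [h1, h2, hindS.integral_mul_eq_mul_integral hig.aestronglyMeasurable (hint a m).aestronglyMeasurable]
      congr 1
      rw [hie, integral_indicator_const _ hSmeas]; simp [Measure.real]
    rw [ProbabilityTheory.cond, integral_smul_measure]
    rw [show (∫ ω, Yobs ω ∂(μ.restrict S)) = ∫ ω in S, Yobs ω ∂μ from rfl]
    rw [setIntegral_congr_fun hSmeas hcong, hsetint]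
    rw [ENNReal.toReal_inv, smul_eq_mul, ← mul_assoc,
      inv_mul_cancel₀ (ENNReal.toReal_ne_zero.mpr ⟨hSne, hSfin⟩), one_mul]
  -- positivity of P(A = false)
  have hΩ : Nonempty Ω := by
    by_contra h
    have h0 : μ Set.univ = 1 := measure_univ
    rw [Set.univ_eq_empty_iff.mpr (not_nonempty_iff.mp h), measure_empty] at h0
    exact zero_ne_one h0
  have h𝓜 : Nonempty 𝓜 := ⟨Mobs hΩ.some⟩
  obtain ⟨m0⟩ := h𝓜
  have hAne : μ (A ⁻¹' {false}) ≠ 0 := by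
    refine fun h => ((hpos false m0).trans_le ?_).ne' h
    exact measure_mono fun ω hω => hω.1
  -- KEY 3: P(M = m | A = false) = P(M(0) = m)
  have key3 : ∀ m : 𝓜, μ[|{ω | A ω = false}] {ω | Mobs ω = m} = μ ((M false) ⁻¹' {m}) := by
    intro m
    have hA : MeasurableSet {ω | A ω = false} := hmA (measurableSet_singleton false)
    have hseteq : {ω | A ω = false} ∩ {ω | Mobs ω = m} = A ⁻¹' {false} ∩ (M false) ⁻¹' {m} := by
      rw [← hSeq false m]; ext ω; simp [Set.mem_setOf_eq]
    rw [cond_apply hA, hseteq,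
      hAM.measure_inter_preimage_eq_mul _ _ (measurableSet_singleton false)
        (measurableSet_singleton m),
      show {ω | A ω = false} = A ⁻¹' {false} from rfl, ← mul_assoc,
      ENNReal.inv_mul_cancel hAne (measure_ne_top μ _), one_mul]
  -- assemble
  rw [key1 true false, key1 false false]
  simp only [key2, key3]
  rw [← Finset.sum_sub_distrib]
  exact Finset.sum_congr rfl fun m _ => (sub_mul _ _ _).symm
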